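/- Let f be a non-erasing morphism such that for each letter a, f(a) is a nonempty power of a. Then for any word w (finite of length at least 2, or infinite), f(w) is quasiperiodic if and only if w is quasiperiodic. In particular, f is not weakly quasiperiodic on finite or infinite words. -/

import Mathlib

namespace QPX

variable {A : Type*}

/-- block start positions -/
def Sg (K : A → ℕ) (g : ℕ → A) (p : ℕ) : ℕ := ∑ t ∈ Finset.range p, K (g t)

/-- block index of a position -/
def Pg (K : A → ℕ) (g : ℕ → A) (i : ℕ) : ℕ := Nat.findGreatest (fun p => Sg K g p ≤ i) i

section basic
variable {K : A → ℕ} {g : ℕ → A} (hK : ∀ a, 1 ≤ K a)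

@[simp] lemma Sg_zero : Sg K g 0 = 0 := by simp [Sg]

lemma Sg_succ (p : ℕ) : Sg K g (p + 1) = Sg K g p + K (g p) := by
  simp [Sg, Finset.sum_range_succ]

include hK

lemma Sg_lt_succ (p : ℕ) : Sg K g p < Sg K g (p + 1) := by
  have := hK (g p); rw [Sg_succ]; omega

lemma Sg_strictMono : StrictMono (Sg K g) :=
  strictMono_nat_of_lt_succ (fun p => Sg_lt_succ hK p)

lemma self_le_Sg (p : ℕ) : p ≤ Sg K g p := by
  induction p with
  | zero => simp
  | succ n ih => have := hK (g n); rw [Sg_succ]; omega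

omit hK in
lemma Sg_Pg_le (i : ℕ) : Sg K g (Pg K g i) ≤ i :=
  Nat.findGreatest_spec (P := fun p => Sg K g p ≤ i) (Nat.zero_le i) (by simp)

lemma lt_Sg_Pg_succ (i : ℕ) : i < Sg K g (Pg K g i + 1) := by
  by_contra h
  push_neg at h
  have h1 : Pg K g i + 1 ≤ i := le_trans (self_le_Sg hK _) h
  have := Nat.le_findGreatest (P := fun p => Sg K g p ≤ i) h1 h
  simp only [Pg] at this ⊢
  omega

lemma Pg_eq {p i : ℕ} (h1 : Sg K g p ≤ i) (h2 : i < Sg K g (p + 1)) : Pg K g i = p := by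
  rcases lt_trichotomy (Pg K g i) p with h | h | h
  · have : Sg K g (Pg K g i + 1) ≤ Sg K g p := (Sg_strictMono hK).monotone h
    have := lt_Sg_Pg_succ hK (g := g) i
    omega
  · exact h
  · have : Sg K g (p + 1) ≤ Sg K g (Pg K g i) := (Sg_strictMono hK).monotone h
    have := Sg_Pg_le (K := K) (g := g) (i := i)
    omega

lemma Pg_mono {i i' : ℕ} (h : i ≤ i') : Pg K g i ≤ Pg K g i' := by
  have h1 : Sg K g (Pg K g i) ≤ i' := le_trans (Sg_Pg_le (K := K) (g := g) i) h
  have h2 : Pg K g i ≤ i' := le_trans (le_trans (self_le_Sg hK _) (Sg_Pg_le (K := K) (g := g) i)) h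
  exact Nat.le_findGreatest h2 h1

lemma Pg_Sg (p : ℕ) : Pg K g (Sg K g p) = p :=
  Pg_eq hK le_rfl (Sg_lt_succ hK p)

lemma yg_block {p i : ℕ} (h1 : Sg K g p ≤ i) (h2 : i < Sg K g (p + 1)) :
    g (Pg K g i) = g p := by rw [Pg_eq hK h1 h2]

/-- letter change forces a block boundary -/
lemma change_boundary {i : ℕ} (h : g (Pg K g i) ≠ g (Pg K g (i + 1))) :
    i + 1 = Sg K g (Pg K g i + 1) ∧ Pg K g (i + 1) = Pg K g i + 1 := by
  have h1 := Sg_Pg_le (K := K) (g := g) (i := i)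
  have h2 := lt_Sg_Pg_succ hK (g := g) i
  by_cases hb : i + 1 < Sg K g (Pg K g i + 1)
  · exfalso; exact h (by rw [Pg_eq hK (le_trans h1 (Nat.le_succ i)) hb])
  · have hb' : i + 1 = Sg K g (Pg K g i + 1) := by omega
    refine ⟨hb', Pg_eq hK (le_of_eq hb'.symm) ?_⟩
    have := Sg_lt_succ hK (g := g) (Pg K g i + 1)
    omega

end basic

/-- ceiling division -/
def cdiv (c k : ℕ) : ℕ := (c + k - 1) / k

lemma cdiv_eq_one {c k : ℕ} (h1 : 1 ≤ c) (h2 : c ≤ k) : cdiv c k = 1 := by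
  have hk : 0 < k := by omega
  unfold cdiv
  rw [Nat.div_eq_of_lt_le] <;> omega

lemma cdiv_rec {c k : ℕ} (hk : 1 ≤ k) (h : k < c) : cdiv c k = cdiv (c - k) k + 1 := by
  unfold cdiv
  have : c + k - 1 = (c - k + k - 1) + k := by omega
  rw [this, Nat.add_div_right _ (by omega)]


section runs
variable {K : A → ℕ} {g : ℕ → A} (hK : ∀ a, 1 ≤ K a)
include hK

lemma leftRun {α : A} : ∀ c, 1 ≤ c → ∀ p, c ≤ Sg K g p →
    (∀ t, t < c → g (Pg K g (Sg K g p - c + t)) = α) →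
    Pg K g (Sg K g p - c) = p - cdiv c (K α) ∧ cdiv c (K α) ≤ p ∧
      ∀ u, p - cdiv c (K α) ≤ u → u < p → g u = α := by
  intro c
  induction c using Nat.strong_induction_on with
  | _ c IH =>
    intro hc p hcp hrun
    obtain ⟨p', rfl⟩ : ∃ p', p = p' + 1 := by
      refine ⟨p - 1, ?_⟩
      rcases Nat.eq_zero_or_pos p with h | h
      · exfalso; rw [h] at hcp; simp [Sg] at hcp; omega
      · omega
    have hS : Sg K g (p' + 1) = Sg K g p' + K (g p') := Sg_succ p'
    have hKp : 1 ≤ K (g p') := hK _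
    have hga : g p' = α := by
      have h1 : Sg K g p' ≤ Sg K g (p'+1) - 1 := by omega
      have h2 : Sg K g (p'+1) - 1 < Sg K g (p'+1) := by omega
      have hb := yg_block hK (p := p') (i := Sg K g (p'+1) - 1) h1
        (by rw [show p' + 1 = p' + 1 from rfl]; omega)
      have h3 := hrun (c-1) (by omega)
      rw [show Sg K g (p'+1) - c + (c-1) = Sg K g (p'+1) - 1 by omega] at h3
      exact hb.symm.trans h3
    have hKa : 1 ≤ K α := by rw [← hga]; exact hKp
    by_cases hck : c ≤ K α
    · have he : cdiv c (K α) = 1 := cdiv_eq_one hc hck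
      have hPg : Pg K g (Sg K g (p'+1) - c) = p' := by
        refine Pg_eq hK ?_ ?_
        · rw [hga] at hS; omega
        · omega
      refine ⟨by rw [he, hPg]; omega, by rw [he]; omega, ?_⟩
      intro u hu1 hu2
      rw [he] at hu1
      have : u = p' := by omega
      rw [this, hga]
    · push_neg at hck
      have hrec : cdiv c (K α) = cdiv (c - K α) (K α) + 1 := cdiv_rec hKa hck
      have hc' : 1 ≤ c - K α := by omega
      have hcp' : c - K α ≤ Sg K g p' := by rw [hga] at hS; omega
      have hrun' : ∀ t, t < c - K α → g (Pg K g (Sg K g p' - (c - K α) + t)) = α := by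
        intro t ht
        have heq : Sg K g p' - (c - K α) + t = Sg K g (p'+1) - c + t := by
          rw [hga] at hS; omega
        rw [heq]; exact hrun t (by omega)
      obtain ⟨ih1, ih2, ih3⟩ := IH (c - K α) (by omega) hc' p' hcp' hrun'
      have heq2 : Sg K g p' - (c - K α) = Sg K g (p'+1) - c := by rw [hga] at hS; omega
      rw [heq2] at ih1
      refine ⟨by rw [hrec, ih1]; omega, by rw [hrec]; omega, ?_⟩
      intro u hu1 hu2
      rcases Nat.lt_or_ge u p' with h | h
      · exact ih3 u (by rw [hrec] at hu1; omega) h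
      · have : u = p' := by omega
        rw [this, hga]

lemma rightRun {β : A} : ∀ c, 1 ≤ c → ∀ p,
    (∀ t, t < c → g (Pg K g (Sg K g p + t)) = β) →
    Pg K g (Sg K g p + c - 1) = p + cdiv c (K β) - 1 ∧ 1 ≤ cdiv c (K β) ∧
      ∀ u, p ≤ u → u < p + cdiv c (K β) → g u = β := by
  intro c
  induction c using Nat.strong_induction_on with
  | _ c IH =>
    intro hc p hrun
    have hgb : g p = β := by
      have h0 := hrun 0 hc
      rwa [Nat.add_zero, Pg_Sg hK] at h0
    have hS : Sg K g (p + 1) = Sg K g p + K (g p) := Sg_succ p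
    have hKb : 1 ≤ K β := by rw [← hgb]; exact hK _
    by_cases hck : c ≤ K β
    · have he : cdiv c (K β) = 1 := cdiv_eq_one hc hck
      have hPg : Pg K g (Sg K g p + c - 1) = p := by
        refine Pg_eq hK (by omega) ?_
        rw [hS, hgb]; omega
      refine ⟨by rw [he, hPg]; omega, by rw [he], ?_⟩
      intro u hu1 hu2
      rw [he] at hu2
      have : u = p := by omega
      rw [this, hgb]
    · push_neg at hck
      have hrec : cdiv c (K β) = cdiv (c - K β) (K β) + 1 := cdiv_rec hKb hck
      have hrun' : ∀ t, t < c - K β → g (Pg K g (Sg K g (p+1) + t)) = β := by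
        intro t ht
        rw [hS, hgb, show Sg K g p + K β + t = Sg K g p + (K β + t) by omega]
        exact hrun (K β + t) (by omega)
      obtain ⟨ih1, ih2, ih3⟩ := IH (c - K β) (by omega) (by omega) (p+1) hrun'
      have heq : Sg K g (p+1) + (c - K β) - 1 = Sg K g p + c - 1 := by rw [hS, hgb]; omega
      rw [heq] at ih1
      refine ⟨by rw [hrec, ih1]; omega, by rw [hrec]; omega, ?_⟩
      intro u hu1 hu2
      rcases Nat.lt_or_ge u (p+1) with h | h
      · have : u = p := by omega
        rw [this, hgb]
      · exact ih3 u h (by rw [hrec] at hu2; omega)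

lemma midSync {p₁ p₂ Lm : ℕ}
    (hmid : ∀ o, o < Lm → g (Pg K g (Sg K g p₁ + o)) = g (Pg K g (Sg K g p₂ + o))) :
    ∀ t, Sg K g (p₁ + t) ≤ Sg K g p₁ + Lm →
      Sg K g (p₂ + t) = Sg K g p₂ + (Sg K g (p₁ + t) - Sg K g p₁) ∧
      ∀ u, u < t → g (p₂ + u) = g (p₁ + u) := by
  intro t
  induction t with
  | zero => intro _; simp
  | succ t ih =>
    intro h
    rw [show p₁ + (t+1) = p₁ + t + 1 by omega] at h
    have hm1 : Sg K g (p₁ + t) ≤ Sg K g (p₁ + t + 1) := le_of_lt (Sg_lt_succ hK _)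
    have hmono1 : Sg K g p₁ ≤ Sg K g (p₁ + t) := (Sg_strictMono hK).monotone (by omega)
    have hmono2 : Sg K g p₂ ≤ Sg K g (p₂ + t) := (Sg_strictMono hK).monotone (by omega)
    have hp1t : p₁ + t + 1 = (p₁ + t) + 1 := rfl
    obtain ⟨ih1, ih2⟩ := ih (by omega)
    set o := Sg K g (p₁ + t) - Sg K g p₁ with ho
    have ho1 : Sg K g (p₁ + t) = Sg K g p₁ + o := by omega
    have hoLm : o < Lm := by
      have := Sg_lt_succ hK (g := g) (p₁ + t)
      omega
    have hlet : g (p₂ + t) = g (p₁ + t) := by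
      have e1 : g (p₁ + t) = g (Pg K g (Sg K g p₁ + o)) := by
        rw [← ho1, Pg_Sg hK]
      have e2 : g (p₂ + t) = g (Pg K g (Sg K g p₂ + o)) := by
        rw [← ih1, Pg_Sg hK]
      rw [e1, e2, hmid o hoLm]
    constructor
    · rw [show p₂ + (t+1) = (p₂ + t) + 1 by omega, Sg_succ,
        show p₁ + (t+1) = (p₁ + t) + 1 by omega, Sg_succ, hlet, ih1]
      omega
    · intro u hu
      rcases Nat.lt_or_ge u t with h' | h'
      · exact ih2 u h'
      · have : u = t := by omega
        rw [this]; exact hlet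

end runs

section hard
variable {K : A → ℕ} {g : ℕ → A} (hK : ∀ a, 1 ≤ K a)
include hK

lemma coreHard (n : ℕ) (qe : ℕ → A) (hn : 1 ≤ n)
    (h0 : ∀ u, u < n → g (Pg K g u) = qe u)
    (hch : ∃ u, u < n ∧ qe u ≠ qe 0) :
    ∀ j, (∀ u, u < n → g (Pg K g (j + u)) = qe u) →
      Pg K g (j + n - 1) + 1 = Pg K g j + (Pg K g (n - 1) + 1) ∧
      ∀ t, t < Pg K g (n - 1) + 1 → g (Pg K g j + t) = g t := by
  classical
  set α := qe 0 with hα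
  set c1 := Nat.find hch with hc1def
  obtain ⟨hc1n, hc1⟩ : c1 < n ∧ qe c1 ≠ α := Nat.find_spec hch
  have hc1min : ∀ u, u < c1 → qe u = α := by
    intro u hu
    have := Nat.find_min hch hu
    push_neg at this
    exact this (by omega)
  have hc11 : 1 ≤ c1 := by
    rcases Nat.eq_zero_or_pos c1 with h | h
    · exfalso; apply hc1; rw [h]
    · exact h
  set β := qe (n - 1) with hβ
  have hcse : ∃ e, e < n ∧ qe (n - 1 - e) ≠ β := by
    by_cases hβα : β = α
    · refine ⟨n - 1 - c1, by omega, ?_⟩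
      rw [show n - 1 - (n - 1 - c1) = c1 by omega, hβα]
      exact hc1
    · exact ⟨n - 1, by omega, by rw [show n - 1 - (n-1) = 0 by omega]; exact fun h => hβα h.symm⟩
  set cs := Nat.find hcse with hcsdef
  obtain ⟨hcsn, hcs1⟩ : cs < n ∧ qe (n - 1 - cs) ≠ β := Nat.find_spec hcse
  have hcsmin : ∀ t, t < cs → qe (n - 1 - t) = β := by
    intro t ht
    have := Nat.find_min hcse ht
    push_neg at this
    exact this (by omega)
  have hcs11 : 1 ≤ cs := by
    rcases Nat.eq_zero_or_pos cs with h | h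
    · exfalso; apply hcs1; rw [h, Nat.sub_zero]
    · exact h
  have hc1cs : c1 + cs ≤ n := by
    by_contra hlt
    push_neg at hlt
    have h1 : qe (c1 - 1) = α := hc1min (c1 - 1) (by omega)
    have h2 : qe (c1 - 1) = β := by
      have := hcsmin (n - 1 - (c1 - 1)) (by omega)
      rwa [show n - 1 - (n - 1 - (c1 - 1)) = c1 - 1 by omega] at this
    have h3 : qe c1 = β := by
      have := hcsmin (n - 1 - c1) (by omega)
      rwa [show n - 1 - (n - 1 - c1) = c1 by omega] at this
    exact hc1 (by rw [h3, ← h2, h1])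
  set e1 := cdiv c1 (K α) with he1def
  set e2 := cdiv cs (K β) with he2def
  set Lm := n - cs - c1 with hLmdef
  have pack : ∀ j, (∀ u, u < n → g (Pg K g (j + u)) = qe u) →
      ∃ pj rj, Sg K g pj = j + c1 ∧ Pg K g j = pj - e1 ∧ e1 ≤ pj ∧
        (∀ u, pj - e1 ≤ u → u < pj → g u = α) ∧
        Sg K g rj = j + (n - cs) ∧ Pg K g (j + n - 1) = rj + e2 - 1 ∧ 1 ≤ e2 ∧
        (∀ u, rj ≤ u → u < rj + e2 → g u = β) := by
    intro j hocc
    have hy1 : g (Pg K g (j + c1 - 1)) = α := by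
      have := hocc (c1 - 1) (by omega)
      rw [show j + (c1 - 1) = j + c1 - 1 by omega] at this
      rw [this]
      exact hc1min (c1 - 1) (by omega)
    have hy2 : g (Pg K g (j + c1)) ≠ α := by
      rw [hocc c1 hc1n]; exact hc1
    obtain ⟨hb1, _⟩ := change_boundary hK (g := g) (i := j + c1 - 1)
      (by rw [show j + c1 - 1 + 1 = j + c1 by omega, hy1]; exact fun h => hy2 h.symm)
    set pj := Pg K g (j + c1 - 1) + 1 with hpjdef
    have hSpj : Sg K g pj = j + c1 := by omega
    have hlrun : ∀ t, t < c1 → g (Pg K g (Sg K g pj - c1 + t)) = α := by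
      intro t ht
      rw [show Sg K g pj - c1 + t = j + t by omega, hocc t (by omega)]
      exact hc1min t ht
    obtain ⟨hl1, hl2, hl3⟩ := leftRun hK c1 hc11 pj (by omega) hlrun
    rw [show Sg K g pj - c1 = j by omega] at hl1
    have hy3 : g (Pg K g (j + (n - 1 - cs))) ≠ β := by
      rw [hocc (n - 1 - cs) (by omega)]; exact hcs1
    have hy4 : g (Pg K g (j + (n - cs))) = β := by
      rw [hocc (n - cs) (by omega)]
      have := hcsmin (cs - 1) (by omega)
      rwa [show n - 1 - (cs - 1) = n - cs by omega] at this
    obtain ⟨hb2, _⟩ := change_boundary hK (g := g) (i := j + (n - 1 - cs))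
      (by rw [show j + (n - 1 - cs) + 1 = j + (n - cs) by omega, hy4]; exact hy3)
    set rj := Pg K g (j + (n - 1 - cs)) + 1 with hrjdef
    have hSrj : Sg K g rj = j + (n - cs) := by omega
    have hrrun : ∀ t, t < cs → g (Pg K g (Sg K g rj + t)) = β := by
      intro t ht
      rw [hSrj, show j + (n - cs) + t = j + (n - cs + t) by omega, hocc (n - cs + t) (by omega)]
      have := hcsmin (cs - 1 - t) (by omega)
      rwa [show n - 1 - (cs - 1 - t) = n - cs + t by omega] at this
    obtain ⟨hr1, hr2, hr3⟩ := rightRun hK cs hcs11 rj hrrun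
    rw [show Sg K g rj + cs - 1 = j + n - 1 by omega] at hr1
    exact ⟨pj, rj, hSpj, hl1, hl2, hl3, hSrj, hr1, hr2, hr3⟩
  obtain ⟨p₀, r₀, hSp₀, hP0, he1p₀, hl₀, hSr₀, hPn, he2pos, hr₀⟩ := pack 0 (by intro u hu; rw [Nat.zero_add]; exact h0 u hu)
  rw [Nat.zero_add] at hSp₀ hSr₀
  rw [show 0 + n - 1 = n - 1 by omega] at hPn
  have hPg0 : Pg K g 0 = 0 := by
    refine Pg_eq hK (by simp) ?_
    have := Sg_lt_succ hK (g := g) 0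
    simpa using this
  have hp₀e1 : p₀ = e1 := by omega
  have hp₀r₀ : p₀ ≤ r₀ := by
    by_contra h
    push_neg at h
    have := Sg_strictMono hK (g := g) h
    omega
  set T := r₀ - p₀ with hTdef
  have hr₀T : r₀ = p₀ + T := by omega
  have hL : Pg K g (n - 1) + 1 = e1 + T + e2 := by omega
  intro j hocc
  obtain ⟨pj, rj, hSpj, hPj, he1pj, hlj, hSrj, hPjn, _, hrj⟩ := pack j hocc
  have hmid : ∀ o, o < Lm → g (Pg K g (Sg K g p₀ + o)) = g (Pg K g (Sg K g pj + o)) := by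
    intro o ho
    rw [hSp₀, hSpj, show j + c1 + o = j + (c1 + o) by omega,
      hocc (c1 + o) (by omega), h0 (c1 + o) (by omega)]
  have hsync := midSync hK hmid T (by
    rw [show p₀ + T = r₀ by omega, hSr₀, hSp₀]
    omega)
  obtain ⟨hsync1, hsync2⟩ := hsync
  have hpjT : pj + T = rj := by
    have : Sg K g (pj + T) = Sg K g rj := by
      rw [hsync1, show p₀ + T = r₀ by omega, hSr₀, hSp₀, hSpj, hSrj]
      omega
    exact (Sg_strictMono hK).injective this
  constructor
  · omega
  · intro t ht
    rw [hL] at ht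
    rcases Nat.lt_or_ge t e1 with h1 | h1
    · have ha1 : g (Pg K g j + t) = α := by
        apply hlj (Pg K g j + t) (by omega) (by omega)
      have ha2 : g t = α := by
        apply hl₀ t (by omega) (by omega)
      rw [ha1, ha2]
    rcases Nat.lt_or_ge t (e1 + T) with h2 | h2
    · have hu := hsync2 (t - e1) (by omega)
      rw [show pj + (t - e1) = Pg K g j + t by omega,
        show p₀ + (t - e1) = t by omega] at hu
      exact hu
    · have hb1 : g (Pg K g j + t) = β := by
        apply hrj (Pg K g j + t) (by omega) (by omega)
      have hb2 : g t = β := by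
        apply hr₀ t (by omega) (by omega)
      rw [hb1, hb2]

end hard

end QPX




namespace QPm

variable {A : Type*}

/-- Image of a finite word under a morphism given by images of letters. -/
def applyF (f : A → List A) (w : List A) : List A := (w.map f).flatten

/-- A morphism is non-erasing if images of letters are nonempty. -/
def NonErasing (f : A → List A) : Prop := ∀ a, f a ≠ []

/-- `wpow u k` is the `k`-fold concatenation `u^k`. -/
def wpow (u : List A) (k : ℕ) : List A := (List.replicate k u).flatten

/-- Every position of `w` is covered by an occurrence of `q` in `w`. -/
def Covers (q w : List A) : Prop :=
  ∀ i < w.length, ∃ j, j ≤ i ∧ i < j + q.length ∧ j + q.length ≤ w.length ∧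
    (w.drop j).take q.length = q

/-- `w` is `q`-quasiperiodic. -/
def QP (q w : List A) : Prop := q ≠ [] ∧ w ≠ q ∧ Covers q w

def Quasiperiodic (w : List A) : Prop := ∃ q, QP q w

def Superprimitive (w : List A) : Prop := ¬ Quasiperiodic w

/-- `q` is THE quasiperiod (shortest quasiperiod) of `w`. -/
def IsQuasiperiod (q w : List A) : Prop :=
  QP q w ∧ ∀ q', QP q' w → q.length ≤ q'.length

/-- Every position of the infinite word `x` is covered by an occurrence of `q`. -/
def InfCovers (q : List A) (x : ℕ → A) : Prop :=
  ∀ i : ℕ, ∃ j, j ≤ i ∧ i < j + q.length ∧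
    ∀ t (ht : t < q.length), x (j + t) = q.get ⟨t, ht⟩

/-- The infinite word `x` is `q`-quasiperiodic. -/
def InfQP (q : List A) (x : ℕ → A) : Prop := q ≠ [] ∧ InfCovers q x

def InfQuasiperiodic (x : ℕ → A) : Prop := ∃ q, InfQP q x

/-- `q` is THE quasiperiod (shortest quasiperiod) of the infinite word `x`. -/
def IsInfQuasiperiod (q : List A) (x : ℕ → A) : Prop :=
  InfQP q x ∧ ∀ q', InfQP q' x → q.length ≤ q'.length

/-- Image of an infinite word under a (non-erasing) morphism: the `n`-th letter
of `f(x)` is the `n`-th letter of the image of a sufficiently long prefix. -/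
def mapInf (f : A → List A) (x : ℕ → A) (n : ℕ) : A :=
  (applyF f (List.ofFn (fun i : Fin (n + 1) => x i))).getD n (x 0)

/-- `f` maps every (nonempty) finite word to a quasiperiodic word. -/
def StronglyQPFin (f : A → List A) : Prop :=
  ∀ w : List A, w ≠ [] → Quasiperiodic (applyF f w)

/-- `f` maps every infinite word to a quasiperiodic infinite word. -/
def StronglyQPInf (f : A → List A) : Prop :=
  ∀ x : ℕ → A, InfQuasiperiodic (mapInf f x)

/-- `f` maps some non-quasiperiodic finite word to a quasiperiodic word. -/
def WeaklyQPFin (f : A → List A) : Prop :=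
  ∃ w : List A, ¬ Quasiperiodic w ∧ Quasiperiodic (applyF f w)

/-- `f` maps some non-quasiperiodic infinite word to a quasiperiodic word. -/
def WeaklyQPInf (f : A → List A) : Prop :=
  ∃ x : ℕ → A, ¬ InfQuasiperiodic x ∧ InfQuasiperiodic (mapInf f x)

/-- The ultimately periodic infinite word `u v^ω` (with default letter `d`
used only when `v` is empty). -/
def ultPer (u v : List A) (d : A) : ℕ → A :=
  fun n => if h : n < u.length then u.get ⟨n, h⟩
           else v.getD ((n - u.length) % v.length) d

/-- A finite word is primitive if it is not a power `u^k` with `k ≥ 2`. -/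
def Primitive (w : List A) : Prop :=
  ¬ ∃ (u : List A) (k : ℕ), 2 ≤ k ∧ w = wpow u k

/-- `k`-fold composition of the morphism `f`. -/
def iterF (f : A → List A) : ℕ → A → List A
  | 0, a => [a]
  | (k + 1), a => applyF f (iterF f k a)

section glue
open QPX

variable {f : A → List A}

lemma applyF_nil : applyF f ([] : List A) = [] := by simp [applyF]

lemma applyF_cons (a : A) (l : List A) : applyF f (a :: l) = f a ++ applyF f l := by
  simp [applyF]

lemma applyF_append (u v : List A) : applyF f (u ++ v) = applyF f u ++ applyF f v := by
  simp [applyF]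

lemma applyF_singleton (a : A) : applyF f [a] = f a := by simp [applyF]

/-- letter image lengths -/
def Kf (f : A → List A) : A → ℕ := fun a => (f a).length

lemma take_succ_eq {w : List A} {p : ℕ} (hp : p < w.length) :
    w.take (p+1) = w.take p ++ [w[p]] := by
  rw [← List.take_concat_get hp]; simp

lemma Sg_take (w : List A) (g : ℕ → A) (hg : ∀ t (h : t < w.length), g t = w[t]) :
    ∀ p, p ≤ w.length → Sg (Kf f) g p = (applyF f (w.take p)).length := by
  intro p
  induction p with
  | zero => intro _; simp [applyF]
  | succ p ih =>
    intro hp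
    rw [Sg_succ, ih (by omega), take_succ_eq (by omega), applyF_append, applyF_singleton,
      List.length_append, hg p (by omega)]
    rfl

lemma slice_forall {w q : List A} {j : ℕ} (hle : j + q.length ≤ w.length)
    (hsl : (w.drop j).take q.length = q) :
    ∀ u (hu : u < q.length), w[j + u]'(by omega) = q[u] := by
  intro u hu
  calc w[j + u]'(by omega) = (w.drop j)[u]'(by rw [List.length_drop]; omega) :=
        (List.getElem_drop ..).symm
    _ = ((w.drop j).take q.length)[u]'(by rw [hsl]; exact hu) := (List.getElem_take ..).symm
    _ = q[u] := by exact List.getElem_of_eq hsl _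

variable (hf : ∀ a : A, ∃ k : ℕ, 1 ≤ k ∧ f a = List.replicate k a)
include hf

lemma hK' : ∀ a : A, 1 ≤ Kf f a := by
  intro a; obtain ⟨k, hk, hfa⟩ := hf a
  simp [Kf, hfa]; omega

lemma applyF_getElem_block (w : List A) (p : ℕ) (hp : p < w.length) (i : ℕ)
    (h1 : (applyF f (w.take p)).length ≤ i) (h2 : i < (applyF f (w.take (p+1))).length)
    (hx : i < (applyF f w).length) :
    (applyF f w)[i] = w[p] := by
  have hsp : w.take (p+1) = w.take p ++ [w[p]] := take_succ_eq hp
  have hw : applyF f w = (applyF f (w.take p) ++ f (w[p])) ++ applyF f (w.drop (p+1)) := by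
    conv_lhs => rw [← List.take_append_drop (p+1) w]
    rw [applyF_append, hsp, applyF_append, applyF_singleton]
  have h2' : i < (applyF f (w.take p)).length + (f (w[p])).length := by
    rw [hsp, applyF_append, applyF_singleton, List.length_append] at h2
    exact h2
  rw [List.getElem_of_eq hw _]
  rw [List.getElem_append_left (by rw [List.length_append]; exact h2')]
  rw [List.getElem_append_right h1]
  obtain ⟨k, hk, hfa⟩ := hf (w[p])
  simp only [hfa]
  exact List.getElem_replicate ..

lemma applyF_letter (w : List A) (g : ℕ → A) (hg : ∀ t (h : t < w.length), g t = w[t])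
    (i : ℕ) (hx : i < (applyF f w).length) :
    Pg (Kf f) g i < w.length ∧ (applyF f w)[i] = g (Pg (Kf f) g i) := by
  have hK := hK' hf
  have hSw : Sg (Kf f) g w.length = (applyF f w).length := by
    have := Sg_take (f := f) w g hg w.length le_rfl
    rwa [List.take_length] at this
  have hple := Sg_Pg_le (K := Kf f) (g := g) (i := i)
  have hplt := lt_Sg_Pg_succ hK (g := g) (i := i)
  have hpw : Pg (Kf f) g i < w.length := by
    by_contra h
    push_neg at h
    have := (Sg_strictMono hK (g := g)).monotone h
    omega
  refine ⟨hpw, ?_⟩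
  rw [applyF_getElem_block hf w (Pg (Kf f) g i) hpw i ?_ ?_ hx, hg _ hpw]
  · rw [← Sg_take (f := f) w g hg _ (by omega)]; exact hple
  · rw [← Sg_take (f := f) w g hg _ (by omega)]; exact hplt

lemma length_le_applyF : ∀ (l : List A), l.length ≤ (applyF f l).length := by
  intro l
  induction l with
  | nil => simp [applyF]
  | cons a l ih =>
    rw [applyF_cons, List.length_append]
    have := hK' hf a
    simp only [Kf] at this
    simp only [List.length_cons]
    omega

lemma hardFin (w : List A) (h2 : 2 ≤ w.length) (hqp : Quasiperiodic (applyF f w)) :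
    Quasiperiodic w := by
  classical
  obtain ⟨q, hqne, hqx, hcov⟩ := hqp
  have hK := hK' hf
  have h0w : 0 < w.length := by omega
  set d := w[0] with hd
  set g : ℕ → A := fun t => w.getD t d with hgdef
  have hg : ∀ t (h : t < w.length), g t = w[t] := fun t h => List.getD_eq_getElem w d h
  set K := Kf f with hKdef
  have hSw : Sg K g w.length = (applyF f w).length := by
    have := Sg_take (f := f) w g hg w.length le_rfl
    rwa [List.take_length] at this
  have hxw : w.length ≤ (applyF f w).length := by
    have := self_le_Sg (K := K) (g := g) hK w.length; omega
  by_cases hall : ∀ p (h : p < w.length), w[p] = d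
  · refine ⟨[d], by simp, ?_, ?_⟩
    · intro h
      have := congrArg List.length h
      simp at this; omega
    · intro i hi
      refine ⟨i, le_rfl, by simp, by simp; omega, ?_⟩
      apply List.ext_getElem (by simp; omega)
      intro u hu1 hu2
      simp only [List.length_cons, List.length_nil] at hu2
      have hu0 : u = 0 := by omega
      subst hu0
      simp only [List.getElem_take, List.getElem_drop]
      simpa using hall i hi
  · push_neg at hall
    have hex : ∃ p, ∃ (h : p < w.length), w[p] ≠ d := hall
    set p₀ := Nat.find hex with hp₀def
    obtain ⟨hp₀w, hp₀d⟩ := Nat.find_spec hex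
    have hp₀min : ∀ u, u < p₀ → ∀ (h : u < w.length), w[u] = d := by
      intro u hu h
      have := Nat.find_min hex hu
      push_neg at this
      exact this h
    set x := applyF f w with hxdef
    have hletter : ∀ i (h : i < x.length), Pg K g i < w.length ∧ x[i] = g (Pg K g i) :=
      fun i h => applyF_letter hf w g hg i h
    have hxpos : 0 < x.length := by omega
    obtain ⟨j₀, hj₀0, hj₀lt, hj₀le, hj₀sl⟩ := hcov 0 hxpos
    have hj₀z : j₀ = 0 := by omega
    subst hj₀z
    rw [Nat.zero_add] at hj₀le
    have hqpre : ∀ u (hu : u < q.length), x[u]'(by omega) = q[u] := by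
      have h' := slice_forall (w := x) (q := q) (by omega) hj₀sl
      intro u hu
      have := h' u hu
      simpa using this
    set qe : ℕ → A := fun u => q.getD u d with hqedef
    have hqeget : ∀ u (hu : u < q.length), qe u = q[u] := fun u hu => List.getD_eq_getElem q d hu
    have hqpos : 0 < q.length := List.length_pos_iff.mpr hqne
    have hocc0 : ∀ u, u < q.length → g (Pg K g u) = qe u := by
      intro u hu
      rw [hqeget u hu, ← hqpre u hu]
      exact ((hletter u (by omega)).2).symm
    have hPg0 : Pg K g 0 = 0 := by
      refine Pg_eq hK (by simp) ?_
      have := Sg_lt_succ hK (g := g) 0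
      simpa using this
    have hx0 : x[0]'hxpos = d := by
      rw [(hletter 0 hxpos).2, hPg0, hg 0 h0w]
    have hqe0 : qe 0 = d := by
      rw [hqeget 0 hqpos, ← hqpre 0 hqpos, hx0]
    have hocc : ∀ j, j + q.length ≤ x.length → (x.drop j).take q.length = q →
        ∀ u, u < q.length → g (Pg K g (j + u)) = qe u := by
      intro j hle hsl u hu
      have h1 := slice_forall (w := x) (q := q) hle hsl u hu
      rw [hqeget u hu, ← h1]
      exact ((hletter (j+u) (by omega)).2).symm
    have hSp₀x : Sg K g p₀ < x.length := by
      have := Sg_strictMono hK (g := g) (show p₀ < w.length from hp₀w); omega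
    have hxSp₀ : x[Sg K g p₀]'hSp₀x = w[p₀] := by
      rw [(hletter _ hSp₀x).2, Pg_Sg hK, hg p₀ hp₀w]
    have hSp₀q : Sg K g p₀ < q.length := by
      by_contra hc
      push_neg at hc
      have hqall : ∀ u (hu : u < q.length), q[u] = d := by
        intro u hu
        have hup : Pg K g u < p₀ := by
          by_contra h'
          push_neg at h'
          have h3 := (Sg_strictMono hK (g := g)).monotone h'
          have h4 := Sg_Pg_le (K := K) (g := g) (i := u)
          omega
        rw [← hqpre u hu, (hletter u (by omega)).2, hg _ (by omega)]
        exact hp₀min _ hup _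
      obtain ⟨j, hj1, hj2, hj3, hj4⟩ := hcov (Sg K g p₀) hSp₀x
      have h5 := slice_forall (w := x) (q := q) hj3 hj4 (Sg K g p₀ - j) (by omega)
      simp only [Nat.add_sub_cancel' hj1] at h5
      rw [hxSp₀] at h5
      exact hp₀d (h5.trans (hqall _ (by omega)))
    have hch : ∃ u, u < q.length ∧ qe u ≠ qe 0 := by
      refine ⟨Sg K g p₀, hSp₀q, ?_⟩
      rw [hqe0, hqeget _ hSp₀q, ← hqpre _ hSp₀q, hxSp₀]
      exact hp₀d
    have main := coreHard hK q.length qe hqpos hocc0 hch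
    set L := Pg K g (q.length - 1) + 1 with hLdef
    have hqlt : q.length < x.length := by
      rcases lt_or_eq_of_le hj₀le with h | h
      · exact h
      · exfalso
        apply hqx
        rw [← hj₀sl, List.drop_zero, h, List.take_length]
    have hqSw : q.length ≤ Sg K g (w.length - 1) := by
      by_contra hgt
      push_neg at hgt
      set d' := x.length - q.length with hd'def
      have hd'pos : 1 ≤ d' := by omega
      obtain ⟨j₁, hj₁1, hj₁2, hj₁3, hj₁4⟩ := hcov (x.length - 1) (by omega)
      have hj₁d : j₁ = d' := by omega
      subst hj₁d
      have hsuf : ∀ u (hu : u < q.length), x[d' + u]'(by omega) = q[u] :=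
        slice_forall (w := x) hj₁3 hj₁4
      have hper : ∀ u (hu : u < q.length), x[u]'(by omega) = x[d' + u]'(by omega) := by
        intro u hu
        rw [hqpre u hu]
        exact (hsuf u hu).symm
      have hSsucc : Sg K g w.length = Sg K g (w.length - 1) + K (g (w.length - 1)) := by
        have := Sg_succ (K := K) (g := g) (w.length - 1)
        rwa [show w.length - 1 + 1 = w.length by omega] at this
      have hd'K : d' < K (g (w.length - 1)) := by omega
      have hγ : ∀ m, ∀ i (h : i < x.length), x.length - i ≤ m → x[i] = g (w.length - 1) := by
        intro m
        induction m with
        | zero => intro i h hm; omega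
        | succ m ih =>
          intro i h hm
          by_cases hi : Sg K g (w.length - 1) ≤ i
          · rw [(hletter i h).2]
            congr 1
            exact Pg_eq hK hi (by rw [show w.length - 1 + 1 = w.length by omega]; omega)
          · push_neg at hi
            have hiu : i < q.length := by omega
            rw [hper i hiu]
            exact ih (d' + i) (by omega) (by omega)
      have hγ1 := hγ x.length 0 hxpos (by omega)
      have hγ2 := hγ x.length (Sg K g p₀) hSp₀x (by omega)
      rw [hx0] at hγ1
      rw [hxSp₀] at hγ2
      exact hp₀d (hγ2.trans hγ1.symm)
    have hLw : L < w.length := by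
      have hlt : Pg K g (q.length - 1) < w.length - 1 := by
        by_contra h'
        push_neg at h'
        have h3 := (Sg_strictMono hK (g := g)).monotone h'
        have h4 := Sg_Pg_le (K := K) (g := g) (i := q.length - 1)
        omega
      omega
    have hLpos : 0 < L := by rw [hLdef]; omega
    refine ⟨w.take L, ?_, ?_, ?_⟩
    · intro h
      have h6 := congrArg List.length h
      rw [List.length_take] at h6
      simp only [List.length_nil] at h6
      omega
    · intro h
      have := congrArg List.length h
      rw [List.length_take] at this
      omega
    · intro p hp
      have hSpx : Sg K g p < x.length := by
        have := Sg_strictMono hK (g := g) (show p < w.length from hp); omega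
      obtain ⟨j, hj1, hj2, hj3, hj4⟩ := hcov (Sg K g p) hSpx
      have hoccj := hocc j hj3 hj4
      obtain ⟨hA, hB⟩ := main j hoccj
      have hPgi : Pg K g (Sg K g p) = p := Pg_Sg hK p
      have hj'p : Pg K g j ≤ p := by
        have := Pg_mono hK (g := g) hj1
        rwa [hPgi] at this
      have hup : p ≤ Pg K g (j + q.length - 1) := by
        have := Pg_mono hK (g := g) (show Sg K g p ≤ j + q.length - 1 by omega)
        rwa [hPgi] at this
      have hPlast : Pg K g (j + q.length - 1) < w.length :=
        (hletter (j + q.length - 1) (by omega)).1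
      have hLlen : (w.take L).length = L := by rw [List.length_take]; omega
      refine ⟨Pg K g j, hj'p, ?_, ?_, ?_⟩
      · rw [hLlen]; omega
      · rw [hLlen]; omega
      · rw [hLlen]
        apply List.ext_getElem
        · rw [List.length_take, List.length_drop, List.length_take]; omega
        · intro t ht1 ht2
          simp only [List.getElem_take, List.getElem_drop]
          have htL : t < L := by
            rw [hLlen] at ht2; exact ht2
          have hBt := hB t htL
          rw [hg _ (by omega), hg _ (by omega)] at hBt
          exact hBt

lemma easyFin (w : List A) (h2 : 2 ≤ w.length) (hqp : Quasiperiodic w) :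
    Quasiperiodic (applyF f w) := by
  classical
  obtain ⟨q, hqne, hwq, hcov⟩ := hqp
  have hK := hK' hf
  have h0w : 0 < w.length := by omega
  set d := w[0] with hd
  set g : ℕ → A := fun t => w.getD t d with hgdef
  have hg : ∀ t (h : t < w.length), g t = w[t] := fun t h => List.getD_eq_getElem w d h
  set K := Kf f with hKdef
  have hST : ∀ p, p ≤ w.length → Sg K g p = (applyF f (w.take p)).length := Sg_take w g hg
  have hSw : Sg K g w.length = (applyF f w).length := by
    have := hST w.length le_rfl
    rwa [List.take_length] at this
  obtain ⟨j₀, hj₀0, hj₀lt, hj₀le, hj₀sl⟩ := hcov 0 h0w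
  have hj₀z : j₀ = 0 := by omega
  subst hj₀z
  rw [Nat.zero_add] at hj₀le
  have hqpre : q = w.take q.length := by conv_lhs => rw [← hj₀sl, List.drop_zero]
  have hqw : q.length < w.length := by
    rcases lt_or_eq_of_le hj₀le with h | h
    · exact h
    · exfalso
      apply hwq
      rw [hqpre, h, List.take_length]
  have hfqpos : 0 < (applyF f q).length := by
    have := length_le_applyF hf q
    have := List.length_pos_iff.mpr hqne
    omega
  have hsplit : applyF f w = applyF f q ++ applyF f (w.drop q.length) := by
    conv_lhs => rw [← List.take_append_drop q.length w]
    rw [applyF_append, ← hqpre]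
  have hxfq : (applyF f q).length < (applyF f w).length := by
    rw [hsplit, List.length_append]
    have := length_le_applyF hf (w.drop q.length)
    rw [List.length_drop] at this
    omega
  refine ⟨applyF f q, ?_, ?_, ?_⟩
  · intro h
    rw [h] at hfqpos
    simp at hfqpos
  · intro h
    rw [h] at hxfq
    exact lt_irrefl _ hxfq
  · intro i hi
    obtain ⟨hpw, hxi⟩ := applyF_letter hf w g hg i hi
    obtain ⟨j, hj1, hj2, hj3, hj4⟩ := hcov (Pg K g i) hpw
    have htake : w.take (j + q.length) = w.take j ++ ((w.drop j).take q.length) :=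
      List.take_add ..
    have hkey : applyF f (w.take (j + q.length)) = applyF f (w.take j) ++ applyF f q := by
      rw [htake, applyF_append, hj4]
    have hSj := hST j (by omega)
    have hSjq := hST (j + q.length) hj3
    have hJfq : Sg K g (j + q.length) = Sg K g j + (applyF f q).length := by
      rw [hSj, hSjq, hkey, List.length_append]
    have hple := Sg_Pg_le (K := K) (g := g) (i := i)
    have hplt := lt_Sg_Pg_succ hK (g := g) (i := i)
    refine ⟨Sg K g j, ?_, ?_, ?_, ?_⟩
    · have := (Sg_strictMono hK (g := g)).monotone hj1
      omega
    · have := (Sg_strictMono hK (g := g)).monotone (show Pg K g i + 1 ≤ j + q.length by omega)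
      omega
    · have := (Sg_strictMono hK (g := g)).monotone hj3
      omega
    · have hx2 : applyF f w = (applyF f (w.take j) ++ applyF f q) ++ applyF f (w.drop (j + q.length)) := by
        conv_lhs => rw [← List.take_append_drop (j + q.length) w]
        rw [applyF_append, hkey]
      rw [hx2, List.append_assoc]
      have hlenJ : (applyF f (w.take j)).length = Sg K g j := hSj.symm
      rw [← hlenJ, List.drop_left, List.take_left]

lemma mapInf_eq (x : ℕ → A) (n : ℕ) :
    mapInf f x n = x (Pg (Kf f) x n) := by
  have hK := hK' hf
  show (applyF f (List.ofFn (fun i : Fin (n + 1) => x i))).getD n (x 0) = _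
  set wN := List.ofFn (fun i : Fin (n+1) => x i) with hwN
  have hlenN : wN.length = n + 1 := by simp [hwN]
  have hgN : ∀ t (h : t < wN.length), x t = wN[t] := by
    intro t h
    simp only [hwN, List.getElem_ofFn]
  have hSN : Sg (Kf f) x (n+1) = (applyF f wN).length := by
    have := Sg_take (f := f) wN x (fun t h => hgN t h) (n+1) (by omega)
    rwa [List.take_of_length_le (by omega)] at this
  have hn : n < (applyF f wN).length := by
    have := self_le_Sg (K := Kf f) (g := x) hK (n+1)
    omega
  rw [List.getD_eq_getElem _ _ hn]
  exact (applyF_letter hf wN x (fun t h => hgN t h) n hn).2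

lemma hardInf (x : ℕ → A) (hqp : InfQuasiperiodic (mapInf f x)) : InfQuasiperiodic x := by
  classical
  by_cases hall : ∀ p, x p = x 0
  · refine ⟨[x 0], by simp, ?_⟩
    intro i
    refine ⟨i, le_rfl, by simp, ?_⟩
    intro t ht
    simp only [List.length_cons, List.length_nil] at ht
    have ht0 : t = 0 := by omega
    subst ht0
    simp [hall]
  · push_neg at hall
    obtain ⟨q, hqne, hicov⟩ := hqp
    have hK := hK' hf
    set K := Kf f with hKdef
    have hme : ∀ n, mapInf f x n = x (Pg K x n) := mapInf_eq hf x
    set p₀ := Nat.find hall with hp₀def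
    have hp₀ : x p₀ ≠ x 0 := Nat.find_spec hall
    have hp₀min : ∀ u, u < p₀ → x u = x 0 := by
      intro u hu
      have := Nat.find_min hall hu
      simpa using this
    have hqpos : 0 < q.length := List.length_pos_iff.mpr hqne
    set qe : ℕ → A := fun u => q.getD u (x 0) with hqedef
    have hqeget : ∀ u (hu : u < q.length), qe u = q.get ⟨u, hu⟩ := by
      intro u hu
      show q.getD u (x 0) = _
      rw [List.getD_eq_getElem q _ hu, List.get_eq_getElem]
    have hocc : ∀ j, (∀ t (ht : t < q.length), mapInf f x (j + t) = q.get ⟨t, ht⟩) →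
        ∀ u, u < q.length → x (Pg K x (j + u)) = qe u := by
      intro j hj u hu
      rw [← hme, hj u hu, hqeget u hu]
    obtain ⟨j₀, hj₀0, hj₀lt, hj₀g⟩ := hicov 0
    have hj₀z : j₀ = 0 := by omega
    subst hj₀z
    have hocc0' := hocc 0 hj₀g
    have hocc0 : ∀ u, u < q.length → x (Pg K x u) = qe u := by
      intro u hu
      have := hocc0' u hu
      rwa [Nat.zero_add] at this
    have hPg0 : Pg K x 0 = 0 := by
      refine Pg_eq hK (by simp) ?_
      have := Sg_lt_succ hK (g := x) 0
      simpa using this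
    have hqe0 : qe 0 = x 0 := by rw [← hocc0 0 hqpos, hPg0]
    have hSp₀q : Sg K x p₀ < q.length := by
      by_contra hc
      push_neg at hc
      have hqall : ∀ u, u < q.length → qe u = x 0 := by
        intro u hu
        rw [← hocc0 u hu]
        have hup : Pg K x u < p₀ := by
          by_contra h'
          push_neg at h'
          have h3 := (Sg_strictMono hK (g := x)).monotone h'
          have h4 := Sg_Pg_le (K := K) (g := x) (i := u)
          omega
        exact hp₀min _ hup
      obtain ⟨j, hj1, hj2, hjg⟩ := hicov (Sg K x p₀)
      have h1 := hjg (Sg K x p₀ - j) (by omega)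
      rw [show j + (Sg K x p₀ - j) = Sg K x p₀ by omega, hme, Pg_Sg hK] at h1
      rw [← hqeget _ (by omega), hqall _ (by omega)] at h1
      exact hp₀ h1
    have hch : ∃ u, u < q.length ∧ qe u ≠ qe 0 := by
      refine ⟨Sg K x p₀, hSp₀q, ?_⟩
      rw [hqe0, ← hocc0 _ hSp₀q, Pg_Sg hK]
      exact hp₀
    have main := coreHard hK q.length qe hqpos hocc0 hch
    set L := Pg K x (q.length - 1) + 1 with hLdef
    refine ⟨List.ofFn (fun t : Fin L => x t), ?_, ?_⟩
    · intro h
      have := congrArg List.length h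
      simp only [List.length_ofFn, List.length_nil] at this
      omega
    · intro p
      obtain ⟨j, hj1, hj2, hjg⟩ := hicov (Sg K x p)
      have hoccj := hocc j hjg
      obtain ⟨hA, hB⟩ := main j hoccj
      refine ⟨Pg K x j, ?_, ?_, ?_⟩
      · have := Pg_mono hK (g := x) hj1
        rwa [Pg_Sg hK] at this
      · rw [List.length_ofFn]
        have := Pg_mono hK (g := x) (show Sg K x p ≤ j + q.length - 1 by omega)
        rw [Pg_Sg hK] at this
        omega
      · intro t ht
        rw [List.length_ofFn] at ht
        have := hB t ht
        simp only [List.get_ofFn]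
        simpa using this

omit hf in
lemma SgShift (x : ℕ → A) : ∀ (l : List A) (j : ℕ),
    (∀ u (hu : u < l.length), x (j + u) = l.get ⟨u, hu⟩) →
    Sg (Kf f) x (j + l.length) = Sg (Kf f) x j + (applyF f l).length := by
  intro l
  induction l with
  | nil => intro j _; simp [applyF]
  | cons a l ih =>
    intro j hj
    have hxj : x j = a := by
      have := hj 0 (by simp)
      simpa using this
    have hsh : ∀ u (hu : u < l.length), x ((j+1) + u) = l.get ⟨u, hu⟩ := by
      intro u hu
      have := hj (u+1) (by simp; omega)
      rw [show j + (u+1) = j + 1 + u by omega] at this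
      rw [this]
      simp
    have hih := ih (j+1) hsh
    rw [show j + (a :: l).length = (j+1) + l.length by simp; omega, hih,
      Sg_succ (K := Kf f) (g := x) j, applyF_cons, List.length_append, hxj]
    simp only [Kf]
    omega

lemma easyInf (x : ℕ → A) (hqp : InfQuasiperiodic x) : InfQuasiperiodic (mapInf f x) := by
  classical
  obtain ⟨q, hqne, hicov⟩ := hqp
  have hK := hK' hf
  set K := Kf f with hKdef
  have hme : ∀ n, mapInf f x n = x (Pg K x n) := mapInf_eq hf x
  have hqpos : 0 < q.length := List.length_pos_iff.mpr hqne
  refine ⟨applyF f q, ?_, ?_⟩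
  · intro h
    have := congrArg List.length h
    have hle := length_le_applyF hf q
    simp only [List.length_nil] at this
    omega
  · intro i
    obtain ⟨j, hj1, hj2, hjg⟩ := hicov (Pg K x i)
    have hshift : ∀ m, m ≤ q.length →
        Sg K x (j + m) = Sg K x j + (applyF f (q.take m)).length := by
      intro m hm
      have hag : ∀ u (hu : u < (q.take m).length), x (j + u) = (q.take m).get ⟨u, hu⟩ := by
        intro u hu
        have hu' : u < q.length := by
          rw [List.length_take] at hu; omega
        rw [hjg u hu']
        simp [List.get_eq_getElem, List.getElem_take]
      have := SgShift (f := f) x (q.take m) j hag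
      rwa [List.length_take, min_eq_left hm] at this
    have hJfq : Sg K x (j + q.length) = Sg K x j + (applyF f q).length := by
      have := hshift q.length le_rfl
      rwa [List.take_length] at this
    have hple := Sg_Pg_le (K := K) (g := x) (i := i)
    have hplt := lt_Sg_Pg_succ hK (g := x) (i := i)
    refine ⟨Sg K x j, ?_, ?_, ?_⟩
    · have := (Sg_strictMono hK (g := x)).monotone hj1
      omega
    · have := (Sg_strictMono hK (g := x)).monotone (show Pg K x i + 1 ≤ j + q.length by omega)
      omega
    · intro t ht
      rw [hme]
      have hPj : j ≤ Pg K x (Sg K x j + t) := by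
        have := Pg_mono hK (g := x) (show Sg K x j ≤ Sg K x j + t by omega)
        rwa [Pg_Sg hK] at this
      have hPlt : Pg K x (Sg K x j + t) < j + q.length := by
        by_contra h'
        push_neg at h'
        have h3 := (Sg_strictMono hK (g := x)).monotone h'
        have h4 := Sg_Pg_le (K := K) (g := x) (i := Sg K x j + t)
        omega
      set u := Pg K x (Sg K x j + t) - j with hudef
      have huq : u < q.length := by omega
      have hb1 : Sg K x (j + u) ≤ Sg K x j + t := by
        rw [show j + u = Pg K x (Sg K x j + t) by omega]
        exact Sg_Pg_le (K := K) (g := x) (i := Sg K x j + t)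
      have hb2 : Sg K x j + t < Sg K x (j + u + 1) := by
        rw [show j + u + 1 = Pg K x (Sg K x j + t) + 1 by omega]
        exact lt_Sg_Pg_succ hK (g := x) (i := Sg K x j + t)
      have hlt1 : (applyF f (q.take u)).length ≤ t := by
        have := hshift u (by omega)
        omega
      have hlt2 : t < (applyF f (q.take (u+1))).length := by
        have := hshift (u+1) (by omega)
        rw [show j + (u+1) = j + u + 1 by omega] at this
        omega
      have hblock := applyF_getElem_block hf q u huq t hlt1 hlt2 ht
      rw [show Pg K x (Sg K x j + t) = j + u by omega, hjg u huq]
      simp only [List.get_eq_getElem]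
      exact hblock.symm

end glue

theorem stmt16 {A : Type*} (f : A → List A)
    (hf : ∀ a : A, ∃ k : ℕ, 1 ≤ k ∧ f a = List.replicate k a) :
    (∀ w : List A, 2 ≤ w.length → (Quasiperiodic (applyF f w) ↔ Quasiperiodic w)) ∧
    (∀ x : ℕ → A, InfQuasiperiodic (mapInf f x) ↔ InfQuasiperiodic x) ∧
    ¬ (∃ w : List A, 2 ≤ w.length ∧ ¬ Quasiperiodic w ∧ Quasiperiodic (applyF f w)) ∧
    ¬ WeaklyQPInf f := by
  have h1 : ∀ w : List A, 2 ≤ w.length → (Quasiperiodic (applyF f w) ↔ Quasiperiodic w) :=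
    fun w h2 => ⟨hardFin hf w h2, easyFin hf w h2⟩
  have h2 : ∀ x : ℕ → A, InfQuasiperiodic (mapInf f x) ↔ InfQuasiperiodic x :=
    fun x => ⟨hardInf hf x, easyInf hf x⟩
  refine ⟨h1, h2, ?_, ?_⟩
  · rintro ⟨w, hw2, hnq, hq⟩
    exact hnq ((h1 w hw2).1 hq)
  · rintro ⟨x, hnq, hq⟩
    exact hnq ((h2 x).1 hq)


end QPm
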